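/- Let A_1, A_2, A_3, A_4 be points on the unit circle centered at the origin in the Euclidean plane, such that every three of them are affinely independent. Then for each index i, the orthocenter H_i of the triangle formed by the three points other than A_i lies on the circle of radius 1 centered at the point H = a_1 + a_2 + a_3 + a_4; that is, dist(H_i, H) = 1 for all i. -/

import Mathlib

open scoped BigOperators

/-- For four points on the unit circle centered at the origin, every three of
which are affinely independent, the orthocenter of each sub-triangle (omitting `A_i`) lies
on the circle of radius `1` centered at `H = a₁ + a₂ + a₃ + a₄`. -/
theorem stmt_5 (a : Fin 4 → EuclideanSpace ℝ (Fin 2)) (ha : ∀ i, ‖a i‖ = 1)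
    (hindep : ∀ i : Fin 4, AffineIndependent ℝ (a ∘ i.succAbove)) :
    ∀ i : Fin 4,
      dist (Affine.Triangle.orthocenter
          (⟨a ∘ i.succAbove, hindep i⟩ :
            Affine.Triangle ℝ (EuclideanSpace ℝ (Fin 2))))
        (∑ j, a j) = 1 := by
  intro i
  set t : Affine.Triangle ℝ (EuclideanSpace ℝ (Fin 2)) := ⟨a ∘ i.succAbove, hindep i⟩
  have hspan : affineSpan ℝ (Set.range t.points) = ⊤ := by
    refine (hindep i).affineSpan_eq_top_iff_card_eq_finrank_add_one.mpr ?_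
    simp [finrank_euclideanSpace]
  have hcc : (0 : EuclideanSpace ℝ (Fin 2)) = t.circumcenter := by
    refine t.eq_circumcenter_of_dist_eq (p := 0) (by simp [hspan]) (r := 1) fun j => ?_
    simp [t, dist_eq_norm, ha]
  have horth : t.orthocenter = ∑ k : Fin 3, a (i.succAbove k) := by
    rw [Affine.Triangle.orthocenter_eq_smul_vsub_vadd_circumcenter, ← hcc]
    simp only [vsub_eq_sub, sub_zero, vadd_eq_add, add_zero, Finset.centroid_def,
      Finset.affineCombination_apply]
    rw [Finset.weightedVSubOfPoint_apply]
    simp [Finset.centroidWeights, smul_smul, Finset.smul_sum]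
    show ∑ x, a (i.succAbove x) - _ + _ = _
    module
  have hsum : (∑ j, a j) = a i + ∑ k : Fin 3, a (i.succAbove k) := by
    rw [Fin.sum_univ_succAbove (fun j => a j) i]
  rw [horth, hsum, dist_eq_norm]
  simp [ha i]
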